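/- Let (ΛV, d) be a Sullivan minimal model of finite rational category (e.g. of finite LS category), and let x ∈ V be a generator of even degree 2n. Then there exist k ≥ 2 and η ∈ ΛV such that d(η) = x^k + R, where R lies in the ideal of ΛV generated by generators of degree ≤ 2n − 1. -/
import Mathlib


open scoped DirectSum

/-- A graded-commutative differential graded algebra over `ℚ`, graded by `ℕ`. -/
structure CDGA where
  R : Type
  [ring : Ring R]
  [alg : Algebra ℚ R]
  gr : ℕ → Submodule ℚ R
  [graded : GradedAlgebra gr]
  d : R →ₗ[ℚ] R
  d_d : ∀ x, d (d x) = 0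
  d_gr : ∀ n, ∀ x ∈ gr n, d x ∈ gr (n + 1)
  leibniz : ∀ (m : ℕ) (x y : R), x ∈ gr m →
    d (x * y) = d x * y + ((-1 : ℚ) ^ m) • (x * d y)
  gcomm : ∀ (m n : ℕ) (x y : R), x ∈ gr m → y ∈ gr n →
    x * y = ((-1 : ℚ) ^ (m * n)) • (y * x)

attribute [instance] CDGA.ring CDGA.alg CDGA.graded

/-- A morphism of differential graded algebras. -/
structure CDGAHom (A B : CDGA) where
  toHom : A.R →ₐ[ℚ] B.R
  map_gr : ∀ n, ∀ x ∈ A.gr n, toHom x ∈ B.gr n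
  map_d : ∀ x, toHom (A.d x) = B.d (toHom x)

/-- Composition of DGA morphisms. -/
def CDGAHom.comp {A B C : CDGA} (g : CDGAHom B C) (f : CDGAHom A B) : CDGAHom A C :=
  ⟨g.toHom.comp f.toHom,
    fun n x hx => g.map_gr n _ (f.map_gr n x hx),
    fun x => by simp [AlgHom.comp_apply, f.map_d, g.map_d]⟩

/-- The sign involution `x ↦ Σ (-1)^n x_n` of a graded algebra. -/
noncomputable def CDGA.sgn (A : CDGA) : A.R → A.R := fun x =>
  DFinsupp.sumAddHom
    (fun n => (((-1 : ℚ) ^ n • (A.gr n).subtype : ↥(A.gr n) →ₗ[ℚ] A.R)).toAddMonoidHom)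
    (DirectSum.decompose A.gr x)

/-- Coefficient-wise application of a map to a polynomial. -/
noncomputable def mapCoeff {R : Type} [Ring R] (g : R → R) (p : Polynomial R) :
    Polynomial R :=
  p.sum fun n a => Polynomial.C (g a) * Polynomial.X ^ n

/-- Multiplication in the path object `B ⊗ Λ(t, dt)`: a pair `(f, g)` represents
`f(t) + g(t)dt`. -/
noncomputable def pathMul (B : CDGA) (u v : Polynomial B.R × Polynomial B.R) :
    Polynomial B.R × Polynomial B.R :=
  (u.1 * v.1, u.1 * v.2 + u.2 * mapCoeff B.sgn v.1)

/-- The differential of the path object `B ⊗ Λ(t, dt)`. -/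
noncomputable def pathD (B : CDGA) (u : Polynomial B.R × Polynomial B.R) :
    Polynomial B.R × Polynomial B.R :=
  (mapCoeff (B.d ·) u.1, (mapCoeff B.sgn u.1).derivative + mapCoeff (B.d ·) u.2)

/-- Two DGA morphisms are DG homotopic if there is a DGA map `A → B ⊗ Λ(t, dt)`
restricting to them at `t = 0` and `t = 1`. -/
noncomputable def DGHomotopic {A B : CDGA} (φ ψ : CDGAHom A B) : Prop :=
  ∃ H : A.R → Polynomial B.R × Polynomial B.R,
    (∀ x y, H (x + y) = H x + H y) ∧
    (∀ (q : ℚ) x, H (q • x) = q • H x) ∧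
    H 1 = (1, 0) ∧
    (∀ x y, H (x * y) = pathMul B (H x) (H y)) ∧
    (∀ n, ∀ x ∈ A.gr n,
      (∀ i, (H x).1.coeff i ∈ B.gr n) ∧ (∀ i, (H x).2.coeff i ∈ B.gr (n - 1))) ∧
    (∀ x, H (A.d x) = pathD B (H x)) ∧
    (∀ x, Polynomial.eval 0 (H x).1 = φ.toHom x) ∧
    (∀ x, Polynomial.eval 1 (H x).1 = ψ.toHom x)

/-- The subspace of decomposable elements: the span of products of two elements of
positive degree. -/
def CDGA.decomposables (A : CDGA) : Submodule ℚ A.R :=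
  Submodule.span ℚ {z | ∃ (p q : ℕ) (x y : A.R),
    x ∈ A.gr (p + 1) ∧ y ∈ A.gr (q + 1) ∧ z = x * y}

/-- A (simply connected) minimal Sullivan algebra: a graded-commutative DGA which is
generated by a graded subspace `V` of generators vanishing in degrees `0, 1`, with
decomposable differential. -/
structure Sullivan extends CDGA where
  V : ℕ → Submodule ℚ R
  V_le : ∀ n, V n ≤ gr n
  V0 : V 0 = ⊥
  V1 : V 1 = ⊥
  generates : Algebra.adjoin ℚ (⋃ n, (V n : Set R)) = ⊤
  minimal : ∀ n, ∀ v ∈ V n, d v ∈ toCDGA.decomposables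


/-- The ideal of a Sullivan algebra generated by the generators of degree `< N`. -/
def Sullivan.lowIdeal (S : Sullivan) (N : ℕ) : Submodule ℚ S.R :=
  Submodule.span ℚ {z | ∃ m, m < N ∧ ∃ g ∈ S.V m, ∃ r : S.R, z = g * r}

/-- Finite rational category of a minimal Sullivan algebra, in the sense of
Félix–Halperin, encoded through the consequences used here: for every `N` the
quotient of `ΛV` by the DG ideal generated by the generators of degree `< N` has
finite rational cup length, i.e. there is an `L` such that any product of `L`
positive-degree elements which are cycles modulo the ideal is a boundary modulo
the ideal. -/
def Sullivan.FiniteRatCat (S : Sullivan) : Prop :=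
  ∀ N : ℕ, ∃ L : ℕ, 0 < L ∧ ∀ a : Fin L → S.R,
    (∀ i, ∃ m, a i ∈ S.gr (m + 1)) → (∀ i, S.d (a i) ∈ S.lowIdeal N) →
    ∃ b : S.R, (List.ofFn a).prod - S.d b ∈ S.lowIdeal N

namespace Sullivan

/-- `lowIdeal` absorbs multiplication on the right. -/
lemma lowIdeal_mul_right (S : Sullivan) {N : ℕ} {z : S.R} (hz : z ∈ S.lowIdeal N)
    (c : S.R) : z * c ∈ S.lowIdeal N := by
  have h : S.lowIdeal N ≤ Submodule.comap (LinearMap.mulRight ℚ c) (S.lowIdeal N) := by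
    rw [Sullivan.lowIdeal, Submodule.span_le]
    rintro w ⟨m, hm, g, hg, r, rfl⟩
    exact Submodule.subset_span ⟨m, hm, g, hg, r * c, by simp [mul_assoc]⟩
  exact h hz

/-- Every monomial on the generators is homogeneous, and if of positive degree,
it starts with a generator of degree at most its total degree. -/
lemma mon_structure (S : Sullivan) :
    ∀ w ∈ Submonoid.closure (⋃ n, (S.V n : Set S.R)),
      ∃ m, w ∈ S.gr m ∧
        (m = 0 ∨ ∃ k, 0 < k ∧ k ≤ m ∧ ∃ g ∈ S.V k, ∃ r, w = g * r) := by
  intro w hw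
  induction hw using Submonoid.closure_induction with
  | mem w hw =>
    obtain ⟨t, ⟨k, rfl⟩, hwk⟩ := hw
    refine ⟨k, S.V_le k hwk, ?_⟩
    rcases Nat.eq_zero_or_pos k with hk | hk
    · exact Or.inl hk
    · exact Or.inr ⟨k, hk, le_refl k, w, hwk, 1, (mul_one w).symm⟩
  | one => exact ⟨0, SetLike.one_mem_graded _, Or.inl rfl⟩
  | mul u v hu hv ihu ihv =>
    obtain ⟨mu, hmu, su⟩ := ihu
    obtain ⟨mv, hmv, sv⟩ := ihv
    refine ⟨mu + mv, SetLike.mul_mem_graded hmu hmv, ?_⟩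
    rcases su with hu0 | ⟨k, hk0, hkm, g, hg, r, rfl⟩
    · rcases sv with hv0 | ⟨k, hk0, hkm, g, hg, r, rfl⟩
      · exact Or.inl (by omega)
      · refine Or.inr ⟨k, hk0, hkm.trans (Nat.le_add_left _ _), g, hg, u * r, ?_⟩
        have hcomm : u * g = g * u := by
          have := S.gcomm mu k u g hmu (S.V_le k hg)
          subst hu0
          simpa using this
        rw [← mul_assoc, hcomm, mul_assoc]
    · exact Or.inr ⟨k, hk0, hkm.trans (Nat.le_add_right _ _), g, hg, r * v,
        by rw [mul_assoc]⟩

/-- Homogeneous elements of positive degree `< N` lie in `lowIdeal N`. -/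
lemma gr_le_lowIdeal (S : Sullivan) {N m : ℕ} (h0 : 0 < m) (hN : m < N) :
    S.gr m ≤ S.lowIdeal N := by
  intro y hy
  have hy' : y ∈ Submodule.span ℚ
      ((Submonoid.closure (⋃ n, (S.V n : Set S.R)) : Submonoid S.R) : Set S.R) := by
    have h1 : y ∈ Subalgebra.toSubmodule (Algebra.adjoin ℚ (⋃ n, (S.V n : Set S.R))) :=
      (Subalgebra.mem_toSubmodule _).mpr (by rw [S.generates]; exact Algebra.mem_top)
    rwa [Algebra.adjoin_eq_span] at h1
  have hmap : Submodule.span ℚ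
      ((Submonoid.closure (⋃ n, (S.V n : Set S.R)) : Submonoid S.R) : Set S.R)
      ≤ Submodule.comap (GradedAlgebra.proj S.gr m) (S.lowIdeal N) := by
    rw [Submodule.span_le]
    intro w hw
    obtain ⟨mw, hwg, hs⟩ := S.mon_structure w hw
    simp only [SetLike.mem_coe, Submodule.mem_comap]
    by_cases hmw : mw = m
    · have hprojw : (GradedAlgebra.proj S.gr m) w = w := by
        rw [GradedAlgebra.proj_apply, DirectSum.decompose_of_mem_same S.gr (hmw ▸ hwg)]
      rw [hprojw]
      rcases hs with h | ⟨k, hk0, hkm, g, hg, r, rfl⟩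
      · omega
      · exact Submodule.subset_span ⟨k, by omega, g, hg, r, rfl⟩
    · have hprojw : (GradedAlgebra.proj S.gr m) w = 0 := by
        rw [GradedAlgebra.proj_apply, DirectSum.decompose_of_mem_ne S.gr hwg hmw]
      rw [hprojw]
      exact Submodule.zero_mem _
  have hres := hmap hy'
  rw [Submodule.mem_comap] at hres
  have hprojy : (GradedAlgebra.proj S.gr m) y = y := by
    rw [GradedAlgebra.proj_apply, DirectSum.decompose_of_mem_same S.gr hy]
  rwa [hprojy] at hres

/-- The differential of an even generator of degree `2(n+1)` lies in the ideal
generated by the generators of lower degree. -/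
lemma d_gen_low (S : Sullivan) (n : ℕ) (x : S.R) (hx : x ∈ S.V (2 * (n + 1))) :
    S.d x ∈ S.lowIdeal (2 * (n + 1)) := by
  have hdx_gr : S.d x ∈ S.gr (2 * (n + 1) + 1) := S.d_gr _ x (S.V_le _ hx)
  have hdec : S.d x ∈ S.toCDGA.decomposables := S.minimal _ x hx
  have key : S.toCDGA.decomposables ≤ Submodule.comap (GradedAlgebra.proj S.gr (2 * (n + 1) + 1)) (S.lowIdeal (2 * (n + 1))) := by
    rw [CDGA.decomposables, Submodule.span_le]
    rintro z ⟨p, q, a, b, ha, hb, rfl⟩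
    simp only [SetLike.mem_coe, Submodule.mem_comap]
    have hab : a * b ∈ S.gr (p + 1 + (q + 1)) := SetLike.mul_mem_graded ha hb
    by_cases hD : p + 1 + (q + 1) = 2 * (n + 1) + 1
    · have hprojab : (GradedAlgebra.proj S.gr (2 * (n + 1) + 1)) (a * b) = a * b := by
        rw [GradedAlgebra.proj_apply, ← hD, DirectSum.decompose_of_mem_same S.gr hab]
      rw [hprojab]
      rcases le_or_gt (p + 1) (n + 1) with h | h
      · exact S.lowIdeal_mul_right
          (S.gr_le_lowIdeal (Nat.succ_pos p) (by omega) ha) b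
      · have hq : q + 1 ≤ n + 1 := by omega
        rw [S.gcomm (p + 1) (q + 1) a b ha hb]
        exact Submodule.smul_mem _ _
          (S.lowIdeal_mul_right (S.gr_le_lowIdeal (Nat.succ_pos q) (by omega) hb) a)
    · have hprojab : (GradedAlgebra.proj S.gr (2 * (n + 1) + 1)) (a * b) = 0 := by
        rw [GradedAlgebra.proj_apply, DirectSum.decompose_of_mem_ne S.gr hab hD]
      rw [hprojab]
      exact Submodule.zero_mem _
  have hres := key hdec
  rw [Submodule.mem_comap] at hres
  have hprojdx : (GradedAlgebra.proj S.gr (2 * (n + 1) + 1)) (S.d x) = S.d x := by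
    rw [GradedAlgebra.proj_apply, DirectSum.decompose_of_mem_same S.gr hdx_gr]
  rwa [hprojdx] at hres

end Sullivan

/-- Let `(ΛV, d)` be a Sullivan minimal model of finite rational category, and let
`x ∈ V` be a generator of even degree `2n`.  Then there are `k ≥ 2` and `η ∈ ΛV`
with `d η = x^k + R`, where `R` lies in the ideal generated by the generators of
degree `≤ 2n - 1`. -/
theorem power_of_even_generator_is_boundary (S : Sullivan) (hcat : S.FiniteRatCat)
    (n : ℕ) (x : S.R) (hx : x ∈ S.V (2 * (n + 1))) :
    ∃ k : ℕ, 2 ≤ k ∧ ∃ η RR : S.R, RR ∈ S.lowIdeal (2 * (n + 1)) ∧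
      S.d η = x ^ k + RR := by
  obtain ⟨L, hL, hcup⟩ := hcat (2 * (n + 1))
  have hgr : x ∈ S.gr (2 * (n + 1)) := S.V_le _ hx
  have hx2 : x ^ 2 ∈ S.gr (2 * (n + 1) + 2 * (n + 1)) := by
    rw [sq]; exact SetLike.mul_mem_graded hgr hgr
  have hdxlow := S.d_gen_low n x hx
  have hdx2 : S.d (x ^ 2) ∈ S.lowIdeal (2 * (n + 1)) := by
    have hleib := S.leibniz (2 * (n + 1)) x x hgr
    have hcomm := S.gcomm (2 * (n + 1)) (2 * (n + 1) + 1) x (S.d x) hgr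
      (S.d_gr _ x hgr)
    have he1 : ((-1 : ℚ)) ^ (2 * (n + 1)) = 1 :=
      Even.neg_one_pow ⟨n + 1, by ring⟩
    have he2 : ((-1 : ℚ)) ^ (2 * (n + 1) * (2 * (n + 1) + 1)) = 1 :=
      Even.neg_one_pow ⟨(n + 1) * (2 * (n + 1) + 1), by ring⟩
    rw [he2, one_smul] at hcomm
    rw [sq, hleib, he1, one_smul, hcomm]
    exact Submodule.add_mem _ (S.lowIdeal_mul_right hdxlow x)
      (S.lowIdeal_mul_right hdxlow x)
  have ha_gr : ∀ i : Fin L, ∃ m, (fun _ : Fin L => x ^ 2) i ∈ S.gr (m + 1) := by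
    intro i
    refine ⟨4 * n + 3, ?_⟩
    have h : 4 * n + 3 + 1 = 2 * (n + 1) + 2 * (n + 1) := by omega
    rw [h]
    exact hx2
  obtain ⟨b, hb⟩ := hcup (fun _ => x ^ 2) ha_gr (fun _ => hdx2)
  have hprod : (List.ofFn (fun _ : Fin L => x ^ 2)).prod = x ^ (2 * L) := by
    rw [List.ofFn_const, List.prod_replicate, ← pow_mul, mul_comm]
  rw [hprod] at hb
  refine ⟨2 * L, by omega, b, S.d b - x ^ (2 * L), ?_, by abel⟩
  rw [show S.d b - x ^ (2 * L) = -(x ^ (2 * L) - S.d b) from (neg_sub _ _).symm]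
  exact Submodule.neg_mem _ hb
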